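/- Basic-Step setup: n = r+s, A₁,…,A_m, C are symmetric n×n real matrices with A₁ = fromBlocks(D,0,0,0) for an r×r positive definite matrix D, and b ∈ ℝᵐ with b₁ = 0. Then the set of attainable primal objective values is unchanged by the reduction: {C • X : X ⪰ 0, Aᵢ • X = bᵢ for all i = 1,…,m} = {C₂₂ • Y : Y is s×s, Y ⪰ 0, (Aᵢ)₂₂ • Y = bᵢ for all i = 2,…,m}. In particular (P) and (P_pre) have the same optimal value. -/

import Mathlib

open Matrix

section
variable {α β : Type*} [Fintype α] [Fintype β]

lemma my_trace_fromBlocks (A : Matrix α α ℝ) (B : Matrix α β ℝ) (Cc : Matrix β α ℝ)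
    (Dd : Matrix β β ℝ) : (fromBlocks A B Cc Dd).trace = A.trace + Dd.trace := by
  simp [Matrix.trace, Fintype.sum_sum_type, fromBlocks]

lemma my_trace_mul_fromBlocks (M : Matrix (α ⊕ β) (α ⊕ β) ℝ) (Y : Matrix β β ℝ) :
    (M * fromBlocks 0 0 0 Y).trace = (M.toBlocks₂₂ * Y).trace := by
  conv_lhs => rw [← fromBlocks_toBlocks M]
  rw [fromBlocks_multiply, my_trace_fromBlocks]
  simp

open scoped MatrixOrder in
lemma posSemidef_iff_eq_transpose_mul_self {n : Type*} [Fintype n]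
    {A : Matrix n n ℝ} : A.PosSemidef ↔ ∃ B : Matrix n n ℝ, A = Bᴴ * B := by
  classical
  constructor
  · intro hA
    obtain ⟨B, rfl⟩ := CStarAlgebra.nonneg_iff_eq_star_mul_self.mp hA.nonneg
    exact ⟨B, rfl⟩
  · rintro ⟨B, rfl⟩
    exact posSemidef_conjTranspose_mul_self B

lemma my_key1 [DecidableEq α] {D M : Matrix α α ℝ} (hD : D.PosDef) (hM : M.PosSemidef)
    (h : (D * M).trace = 0) : M = 0 := by
  obtain ⟨B, rfl⟩ := posSemidef_iff_eq_transpose_mul_self.mp hM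
  suffices hB : B = 0 by simp [hB]
  rw [← mul_assoc, trace_mul_cycle] at h
  have hdiag : ∀ i, (B * D * Bᴴ) i i = (fun j => B i j) ⬝ᵥ D *ᵥ (fun j => B i j) := by
    intro i
    simp only [Matrix.mul_apply, conjTranspose_apply, star_trivial, dotProduct,
      Matrix.mulVec, Finset.sum_mul, Finset.mul_sum]
    rw [Finset.sum_comm]
    exact Finset.sum_congr rfl fun j _ => Finset.sum_congr rfl fun k _ => by ring
  have hnn : ∀ i, 0 ≤ (B * D * Bᴴ) i i := fun i => by
    rw [hdiag i]; simpa using hD.posSemidef.dotProduct_mulVec_nonneg (fun j => B i j)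
  have hz : ∀ i, (B * D * Bᴴ) i i = 0 := by
    intro i
    exact (Finset.sum_eq_zero_iff_of_nonneg (fun i _ => hnn i)).mp h i (Finset.mem_univ i)
  ext i j
  simp only [Matrix.zero_apply]
  by_contra hij
  have hv : (fun k => B i k) ≠ 0 := fun hv0 => hij (by simpa using congrFun hv0 j)
  have hpos := hD.dotProduct_mulVec_pos hv
  simp only [star_trivial, Pi.star_def] at hpos
  rw [← hdiag i] at hpos
  linarith [hz i]

lemma my_key2 {X : Matrix (α ⊕ β) (α ⊕ β) ℝ} (hX : X.PosSemidef)
    (h11 : X.toBlocks₁₁ = 0) : X = fromBlocks 0 0 0 X.toBlocks₂₂ := by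
  obtain ⟨E, rfl⟩ := posSemidef_iff_eq_transpose_mul_self.mp hX
  have hcol : ∀ (k) (i : α), E k (Sum.inl i) = 0 := by
    intro k i
    have h0 : (Eᴴ * E) (Sum.inl i) (Sum.inl i) = 0 := by
      have := congrFun (congrFun h11 i) i
      simpa [toBlocks₁₁] using this
    have hs : ∑ k', E k' (Sum.inl i) * E k' (Sum.inl i) = 0 := by
      simpa [Matrix.mul_apply, conjTranspose_apply] using h0
    have hk := (Finset.sum_eq_zero_iff_of_nonneg (fun k' _ => mul_self_nonneg _)).mp hs
      k (Finset.mem_univ k)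
    nlinarith [hk]
  ext i j
  cases i with
  | inl i =>
    cases j <;> simp [fromBlocks, Matrix.mul_apply, conjTranspose_apply, hcol]
  | inr i =>
    cases j with
    | inl j => simp [fromBlocks, Matrix.mul_apply, conjTranspose_apply, hcol]
    | inr j => simp [fromBlocks, toBlocks₂₂, Matrix.mul_apply]
end

/-- Basic-Step objective-value invariance: with `A 0 = fromBlocks D 0 0 0`, `D ≻ 0`,
`b 0 = 0`, the set of attainable primal objective values of (P) coincides with that
of the reduced problem (P_pre). -/
theorem sieve_basic_step_values (r s m : ℕ)
    (A : Fin (m + 1) → Matrix (Fin r ⊕ Fin s) (Fin r ⊕ Fin s) ℝ)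
    (hA : ∀ i, (A i).IsSymm)
    (C : Matrix (Fin r ⊕ Fin s) (Fin r ⊕ Fin s) ℝ) (hC : C.IsSymm)
    (D : Matrix (Fin r) (Fin r) ℝ) (hD : D.PosDef)
    (hA0 : A 0 = fromBlocks D 0 0 0)
    (b : Fin (m + 1) → ℝ) (hb0 : b 0 = 0) :
    {v : ℝ | ∃ X : Matrix (Fin r ⊕ Fin s) (Fin r ⊕ Fin s) ℝ,
        X.PosSemidef ∧ (∀ i, (A i * X).trace = b i) ∧ (C * X).trace = v} =
    {v : ℝ | ∃ Y : Matrix (Fin s) (Fin s) ℝ,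
        Y.PosSemidef ∧ (∀ i : Fin m, ((A i.succ).toBlocks₂₂ * Y).trace = b i.succ) ∧
        (C.toBlocks₂₂ * Y).trace = v} := by
  ext v
  simp only [Set.mem_setOf_eq]
  constructor
  · rintro ⟨X, hX, hTr, rfl⟩
    have h0 : (D * X.toBlocks₁₁).trace = 0 := by
      have h := hTr 0
      rw [hA0, hb0, ← fromBlocks_toBlocks X, fromBlocks_multiply, my_trace_fromBlocks] at h
      simpa using h
    have h11 : X.toBlocks₁₁ = 0 :=
      my_key1 hD (hX.submatrix Sum.inl : (X.submatrix Sum.inl Sum.inl).PosSemidef) h0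
    have hXeq := my_key2 hX h11
    refine ⟨X.toBlocks₂₂, (hX.submatrix Sum.inr : (X.submatrix Sum.inr Sum.inr).PosSemidef),
      fun i => ?_, ?_⟩
    · rw [← my_trace_mul_fromBlocks, ← hXeq]; exact hTr i.succ
    · rw [← my_trace_mul_fromBlocks, ← hXeq]
  · rintro ⟨Y, hY, hTr, rfl⟩
    refine ⟨fromBlocks 0 0 0 Y, ?_, fun i => ?_, ?_⟩
    · obtain ⟨B, rfl⟩ := posSemidef_iff_eq_transpose_mul_self.mp hY
      have h : fromBlocks (0 : Matrix (Fin r) (Fin r) ℝ) 0 0 (Bᴴ * B)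
          = (fromBlocks 0 0 0 B)ᴴ * fromBlocks 0 0 0 B := by
        rw [fromBlocks_conjTranspose, fromBlocks_multiply]; simp
      rw [h]; exact posSemidef_conjTranspose_mul_self _
    · induction i using Fin.cases with
      | zero => rw [my_trace_mul_fromBlocks, hA0, hb0]; simp
      | succ i => rw [my_trace_mul_fromBlocks]; exact hTr i
    · rw [my_trace_mul_fromBlocks]
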